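/- Let n ≥ 1 and let c ∈ ℝ^n with c_i > 1 for some index i. Then the hyperplane h = {x ∈ ℝ^n : ∑_{i=1}^n c_i x_i = 1} has weight w(h) ≤ 1 − 1/n. -/

import Mathlib

open scoped Classical

namespace CH

variable {n : ℕ}

/-- sum of `c` over a list -/
def lsum (c : Fin n → ℝ) (l : List (Fin n)) : ℝ := (l.map c).sum

lemma lsum_append (c : Fin n → ℝ) (l m : List (Fin n)) :
    lsum c (l ++ m) = lsum c l + lsum c m := by
  simp [lsum]

lemma lsum_perm (c : Fin n → ℝ) {l m : List (Fin n)} (h : l.Perm m) :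
    lsum c l = lsum c m := (h.map c).sum_eq

/-- prefix-canonical: every proper prefix sum is at most `j/t`. -/
def Canon (c : Fin n → ℝ) (l : List (Fin n)) : Prop :=
  ∀ j, 0 < j → j < l.length → lsum c (l.take j) ≤ (j : ℝ) / (l.length : ℝ)

lemma lsum_take_add (c : Fin n → ℝ) (l : List (Fin n)) (a b : ℕ) :
    lsum c (l.take (a + b)) = lsum c (l.take a) + lsum c ((l.drop a).take b) := by
  rw [List.take_add, lsum_append]

/-- Cycle lemma: some rotation is canonical. -/
lemma exists_canon_rotate (c : Fin n → ℝ) (l : List (Fin n)) (hl : l ≠ [])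
    (hsum : lsum c l = 1) : ∃ r < l.length, Canon c (l.rotate r) := by
  set t := l.length with ht
  have ht0 : 0 < t := List.length_pos_iff.2 hl
  set F : ℕ → ℝ := fun k => lsum c (l.take k) - (k : ℝ) / t with hF
  obtain ⟨r, hrmem, hrmax⟩ :=
    Finset.exists_max_image (Finset.range t) F ⟨0, Finset.mem_range.2 ht0⟩
  have hrt : r < t := Finset.mem_range.1 hrmem
  have hFmax : ∀ k ≤ t, F k ≤ F r := by
    intro k hk
    rcases eq_or_lt_of_le hk with rfl | hk
    · have hFt : F t = 0 := by
        simp only [hF]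
        rw [ht, List.take_length]
        have hne : (l.length:ℝ) ≠ 0 := by exact_mod_cast (List.length_pos_iff.2 hl).ne'
        rw [hsum, div_self hne, sub_self]
      have hF0 : F 0 = 0 := by simp [hF, lsum]
      rw [hFt, ← hF0]
      exact hrmax 0 (Finset.mem_range.2 ht0)
    · exact hrmax k (Finset.mem_range.2 hk)
  refine ⟨r, hrt, ?_⟩
  have hrot : l.rotate r = l.drop r ++ l.take r :=
    List.rotate_eq_drop_append_take hrt.le
  have hlen : (l.rotate r).length = t := by rw [List.length_rotate]
  intro j hj0 hjt
  rw [hlen] at hjt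
  rw [hlen]
  have hdroplen : (l.drop r).length = t - r := by simp [ht]
  by_cases hcase : j ≤ t - r
  · -- no wrap
    have h1 : (l.rotate r).take j = (l.drop r).take j := by
      rw [hrot, List.take_append, hdroplen,
        Nat.sub_eq_zero_of_le hcase, List.take_zero, List.append_nil]
    have h2 : lsum c (l.take (r + j)) = lsum c (l.take r) + lsum c ((l.drop r).take j) :=
      lsum_take_add c l r j
    have h3 : F (r + j) ≤ F r := hFmax _ (by omega)
    rw [h1]
    have := h3
    simp only [hF] at this
    rw [h2] at this
    push_cast at this ⊢
    have htpos : (0:ℝ) < t := by positivity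
    have hd : ((r:ℝ)+(j:ℝ))/(t:ℝ) - (r:ℝ)/(t:ℝ) = (j:ℝ)/(t:ℝ) := by ring
    linarith
  · -- wrap around
    push_neg at hcase
    have hjr : t - r < j := hcase
    set m := j + r - t with hm
    have hmr : m < r := by omega
    have h1 : (l.rotate r).take j = l.drop r ++ (l.take r).take m := by
      rw [hrot, List.take_append, hdroplen,
        List.take_of_length_le (by omega : (l.drop r).length ≤ j)]
      congr 2
      omega
    have hdropsum : lsum c (l.drop r) = 1 - lsum c (l.take r) := by
      have : lsum c (l.take r) + lsum c (l.drop r) = 1 := by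
        rw [← lsum_append, List.take_append_drop, hsum]
      linarith
    have htm : (l.take r).take m = l.take m := by
      rw [List.take_take, min_eq_left hmr.le]
    have h3 : F m ≤ F r := hFmax _ (by omega)
    rw [h1, lsum_append, hdropsum, htm]
    simp only [hF] at h3
    have htpos : (0:ℝ) < t := by positivity
    have hcast : (m : ℝ) = (j : ℝ) + r - t := by
      rw [hm, Nat.cast_sub (by omega)]
      push_cast
      ring
    rw [hcast] at h3
    have hdiv : ((j:ℝ) + r - t) / t - (r:ℝ)/t = (j:ℝ)/t - 1 := by
      field_simp
      ring
    linarith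

/-- Key uniqueness: a list cannot have two good prefixes the longer being canonical. -/
lemma not_two_good (c : Fin n → ℝ) (z : List (Fin n)) {t₁ t₂ : ℕ}
    (h12 : t₁ < t₂) (ht1 : 0 < t₁) (ht2 : t₂ ≤ z.length)
    (hg1 : lsum c (z.take t₁) = 1) (hg2 : lsum c (z.take t₂) = 1)
    (hc2 : Canon c (z.take t₂)) : False := by
  have hlen : (z.take t₂).length = t₂ := List.length_take_of_le ht2
  have := hc2 t₁ ht1 (by rw [hlen]; exact h12)
  rw [List.take_take, min_eq_left h12.le, hg1, hlen] at this
  have ht2pos : (0:ℝ) < t₂ := by exact_mod_cast lt_trans ht1 h12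
  rw [le_div_iff₀ ht2pos, one_mul] at this
  exact absurd this (by exact_mod_cast Nat.not_le.2 h12)

/-- a good canonical list does not start with a coordinate `> 1`. -/
lemma head_ne (c : Fin n → ℝ) {i : Fin n} (hi : 1 < c i) (l : List (Fin n))
    (hg : lsum c l = 1) (hc : Canon c l) (a : Fin n) (ha : a ∈ l.head?) : a ≠ i := by
  cases l with
  | nil => simp at ha
  | cons a lt =>
    simp only [List.head?_cons, Option.mem_some_iff] at ha
    subst ha
    rcases Nat.eq_or_lt_of_le (Nat.one_le_iff_ne_zero.2 (by simp :
        (List.cons a lt).length ≠ 0)) with hlen | hlen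
    · -- length 1 : lt = []
      have : lt = [] := by
        have := hlen.symm
        simpa using this
      subst this
      simp only [lsum, List.map_cons, List.map_nil, List.sum_cons, List.sum_nil,
        add_zero] at hg
      intro h; rw [h] at hg; linarith
    · have h1 := hc 1 one_pos hlen
      have : lsum c ((a :: lt).take 1) = c a := by simp [lsum]
      rw [this] at h1
      have hL : (0:ℝ) < ((a :: lt).length : ℝ) := by positivity
      have : (1:ℝ) / ((a :: lt).length : ℝ) ≤ 1 := by
        rw [div_le_one hL]
        exact_mod_cast Nat.one_le_iff_ne_zero.2 (by simp)
      intro h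
      have hca : c a ≤ 1 := le_trans (by exact_mod_cast h1) this
      rw [h] at hca
      linarith

/-- The finset of arrangements of `S`. -/
noncomputable def arr (S : Finset (Fin n)) : Finset (List (Fin n)) :=
  S.toList.permutations.toFinset

lemma mem_arr {S : Finset (Fin n)} {l : List (Fin n)} :
    l ∈ arr S ↔ l.Perm S.toList := by
  simp [arr, List.mem_permutations]

lemma card_arr (S : Finset (Fin n)) : (arr S).card = S.card.factorial := by
  rw [arr, List.toFinset_card_of_nodup (List.nodup_permutations _ S.nodup_toList),
    List.length_permutations, Finset.length_toList]

lemma arr_length {S : Finset (Fin n)} {l : List (Fin n)} (h : l ∈ arr S) :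
    l.length = S.card := by
  rw [(mem_arr.1 h).length_eq, Finset.length_toList]

lemma arr_lsum (c : Fin n → ℝ) {S : Finset (Fin n)} {l : List (Fin n)} (h : l ∈ arr S) :
    lsum c l = ∑ i ∈ S, c i := by
  rw [lsum_perm c (mem_arr.1 h)]
  rw [lsum, Finset.sum_eq_multiset_sum, ← Finset.coe_toList S, Multiset.map_coe,
    Multiset.sum_coe]

/-- canonical arrangements of `S` -/
noncomputable def carr (c : Fin n → ℝ) (S : Finset (Fin n)) : Finset (List (Fin n)) :=
  (arr S).filter (fun l => Canon c l)

lemma card_carr (c : Fin n → ℝ) {S : Finset (Fin n)} (hS : S.Nonempty)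
    (hsum : ∑ i ∈ S, c i = 1) : (S.card - 1).factorial ≤ (carr c S).card := by
  set t := S.card with htdef
  have ht0 : 0 < t := Finset.card_pos.2 hS
  -- the rotation map
  have hrot : ∀ l ∈ arr S, ∃ r < l.length, Canon c (l.rotate r) := by
    intro l hl
    refine exists_canon_rotate c l ?_ ?_
    · intro hnil
      rw [hnil] at hl
      have := arr_length hl
      simp at this; omega
    · rw [arr_lsum c hl]; exact hsum
  set Φ : List (Fin n) → List (Fin n) := fun l =>
    if h : l ∈ arr S then l.rotate (Classical.choose (hrot l h)) else l with hΦ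
  have hΦmem : ∀ l ∈ arr S, Φ l ∈ carr c S ∧
      ∃ r < l.length, Φ l = l.rotate r := by
    intro l hl
    have hspec := Classical.choose_spec (hrot l hl)
    simp only [hΦ, dif_pos hl]
    refine ⟨Finset.mem_filter.2 ⟨?_, hspec.2⟩, ⟨_, hspec.1, rfl⟩⟩
    · exact mem_arr.2 ((l.rotate_perm _).trans (mem_arr.1 hl))
  have himage : (arr S).image Φ ⊆ carr c S := by
    intro b hb
    obtain ⟨l, hl, rfl⟩ := Finset.mem_image.1 hb
    exact (hΦmem l hl).1
  have hfib : ∀ b ∈ (arr S).image Φ,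
      ((arr S).filter (fun a => Φ a = b)).card ≤ t := by
    intro b hb
    have hsub : (arr S).filter (fun a => Φ a = b) ⊆
        (Finset.range t).image (fun k => b.rotate (k + 1)) := by
      intro a ha
      obtain ⟨hamem, haeq⟩ := Finset.mem_filter.1 ha
      obtain ⟨_, ⟨r, hr, hreq⟩⟩ := hΦmem a hamem
      have halen : a.length = t := arr_length hamem
      rw [halen] at hr
      refine Finset.mem_image.2 ⟨t - r - 1, Finset.mem_range.2 (by omega), ?_⟩
      rw [← haeq, hreq, List.rotate_rotate]
      have : r + (t - r - 1 + 1) = t := by omega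
      rw [this, ← halen, List.rotate_length]
    calc ((arr S).filter (fun a => Φ a = b)).card
        ≤ ((Finset.range t).image (fun k => b.rotate (k + 1))).card :=
          Finset.card_le_card hsub
      _ ≤ t := (Finset.card_image_le).trans (by rw [Finset.card_range])
  have hmain : t.factorial ≤ t * (carr c S).card := by
    calc t.factorial = (arr S).card := (card_arr S).symm
      _ ≤ t * ((arr S).image Φ).card := Finset.card_le_mul_card_image _ t hfib
      _ ≤ t * (carr c S).card := by
          exact Nat.mul_le_mul_left t (Finset.card_le_card himage)
  rw [← Nat.mul_factorial_pred ht0.ne'] at hmain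
  exact Nat.le_of_mul_le_mul_left hmain ht0

section Main

variable (c : Fin n → ℝ)

/-- good sets -/
noncomputable def G : Finset (Finset (Fin n)) :=
  Finset.univ.filter (fun S => S.Nonempty ∧ ∑ i ∈ S, c i = 1)

/-- the piece associated to a good set -/
noncomputable def piece (S : Finset (Fin n)) : Finset (List (Fin n)) :=
  ((carr c S) ×ˢ (arr Sᶜ)).image (fun p => p.1 ++ p.2)

lemma mem_piece_props {S : Finset (Fin n)} (hS : S ∈ G c) {z : List (Fin n)}
    (hz : z ∈ piece c S) :
    z.take S.card ∈ carr c S ∧ z.drop S.card ∈ arr Sᶜ := by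
  obtain ⟨⟨l, m⟩, hp, rfl⟩ := Finset.mem_image.1 hz
  obtain ⟨hl, hm⟩ := Finset.mem_product.1 hp
  have hlen : l.length = S.card := arr_length (Finset.mem_filter.1 hl).1
  rw [← hlen, List.take_left, List.drop_left]
  exact ⟨hl, hm⟩

lemma card_piece (S : Finset (Fin n)) :
    (piece c S).card = (carr c S).card * (arr Sᶜ).card := by
  rw [piece, Finset.card_image_of_injOn, Finset.card_product]
  rintro ⟨l, m⟩ hp ⟨l', m'⟩ hp' heq
  obtain ⟨hl, hm⟩ := Finset.mem_product.1 (Finset.mem_coe.1 hp)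
  obtain ⟨hl', hm'⟩ := Finset.mem_product.1 (Finset.mem_coe.1 hp')
  have h1 : l.length = S.card := arr_length (Finset.mem_filter.1 hl).1
  have h2 : l'.length = S.card := arr_length (Finset.mem_filter.1 hl').1
  obtain ⟨e1, e2⟩ := List.append_inj heq (h1.trans h2.symm)
  exact Prod.ext e1 e2

lemma piece_perm {S : Finset (Fin n)} {z : List (Fin n)} (hz : z ∈ piece c S) :
    z.Perm (Finset.univ : Finset (Fin n)).toList := by
  obtain ⟨⟨l, m⟩, hp, rfl⟩ := Finset.mem_image.1 hz
  obtain ⟨hl, hm⟩ := Finset.mem_product.1 hp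
  have hl' : l.Perm S.toList := mem_arr.1 (Finset.mem_filter.1 hl).1
  have hm' : m.Perm (Sᶜ).toList := mem_arr.1 hm
  refine (hl'.append hm').trans ?_
  refine List.perm_of_nodup_nodup_toFinset_eq ?_ (Finset.nodup_toList _) ?_
  · refine (Finset.nodup_toList S).append (Finset.nodup_toList Sᶜ) ?_
    intro a haS haSc
    rw [Finset.mem_toList] at haS haSc
    exact absurd haS (by simpa using haSc)
  · ext a
    simp [Finset.mem_toList]

/-- master finset -/
noncomputable def M (i : Fin n) : Finset (List (Fin n)) :=
  (arr (Finset.univ : Finset (Fin n))).filter (fun z => ∀ a ∈ z.head?, a ≠ i)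

lemma piece_subset {i : Fin n} (hi : 1 < c i) {S : Finset (Fin n)} (hS : S ∈ G c) :
    piece c S ⊆ M (n := n) i := by
  intro z hz
  have hperm := piece_perm c hz
  obtain ⟨hSne, hSsum⟩ := (Finset.mem_filter.1 hS).2
  obtain ⟨hl, -⟩ := mem_piece_props c hS hz
  obtain ⟨hlarr, hlcanon⟩ := Finset.mem_filter.1 hl
  have hllen : (z.take S.card).length = S.card := arr_length hlarr
  have hlne : z.take S.card ≠ [] := by
    intro hnil
    rw [hnil] at hllen
    have := Finset.card_pos.2 hSne
    simp at hllen; omega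
  have hgood : lsum c (z.take S.card) = 1 := by rw [arr_lsum c hlarr]; exact hSsum
  refine Finset.mem_filter.2 ⟨mem_arr.2 hperm, ?_⟩
  intro a ha
  have hzhead : z.head? = (z.take S.card).head? := by
    conv_lhs => rw [← List.take_append_drop S.card z]
    exact List.head?_append_of_ne_nil _ hlne
  rw [hzhead] at ha
  exact head_ne c hi _ hgood hlcanon a ha

lemma piece_disjoint {i : Fin n} (hi : 1 < c i) :
    ∀ S ∈ G c, ∀ S' ∈ G c, S ≠ S' → Disjoint (piece c S) (piece c S') := by
  have key : ∀ S ∈ G c, ∀ S' ∈ G c, S.card < S'.card →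
      ∀ z, z ∈ piece c S → z ∈ piece c S' → False := by
    intro S hS S' hS' hlt z hz hz'
    obtain ⟨hl, -⟩ := mem_piece_props c hS hz
    obtain ⟨hl', -⟩ := mem_piece_props c hS' hz'
    have hg : lsum c (z.take S.card) = 1 := by
      rw [arr_lsum c (Finset.mem_filter.1 hl).1]
      exact (Finset.mem_filter.1 hS).2.2
    have hg' : lsum c (z.take S'.card) = 1 := by
      rw [arr_lsum c (Finset.mem_filter.1 hl').1]
      exact (Finset.mem_filter.1 hS').2.2
    have hcanon' : Canon c (z.take S'.card) := (Finset.mem_filter.1 hl').2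
    have hlen' : (z.take S'.card).length = S'.card := arr_length (Finset.mem_filter.1 hl').1
    have hle : S'.card ≤ z.length := by
      have : (z.take S'.card).length = min S'.card z.length := List.length_take
      omega
    exact not_two_good c z hlt (Finset.card_pos.2 (Finset.mem_filter.1 hS).2.1) hle
      hg hg' hcanon'
  intro S hS S' hS' hne
  rw [Finset.disjoint_left]
  intro z hz hz'
  rcases lt_trichotomy S.card S'.card with hlt | heq | hlt
  · exact key S hS S' hS' hlt z hz hz'
  · -- same card: then S = S' since take determines
    apply hne
    obtain ⟨hl, -⟩ := mem_piece_props c hS hz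
    obtain ⟨hl', -⟩ := mem_piece_props c hS' hz'
    have p1 : (z.take S.card).Perm S.toList := mem_arr.1 (Finset.mem_filter.1 hl).1
    have p2 : (z.take S'.card).Perm S'.toList := mem_arr.1 (Finset.mem_filter.1 hl').1
    rw [← heq] at p2
    have hp : S.toList.Perm S'.toList := p1.symm.trans p2
    ext a
    rw [← Finset.mem_toList, ← Finset.mem_toList]
    exact hp.mem_iff
  · exact key S' hS' S hS hlt z hz' hz

lemma card_M_le {i : Fin n} : (M (n := n) i).card + (n - 1).factorial ≤ n.factorial := by
  have hpart := Finset.card_filter_add_card_filter_not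
    (s := arr (Finset.univ : Finset (Fin n))) (fun z => ∀ a ∈ z.head?, a ≠ i)
  have hcardu : (arr (Finset.univ : Finset (Fin n))).card = n.factorial := by
    rw [card_arr]; simp
  -- injection from arrangements of univ.erase i into the negated filter
  have hinj : (n - 1).factorial ≤
      ((arr (Finset.univ : Finset (Fin n))).filter
        (fun z => ¬ ∀ a ∈ z.head?, a ≠ i)).card := by
    have hcard : (arr ((Finset.univ : Finset (Fin n)).erase i)).card = (n - 1).factorial := by
      rw [card_arr, Finset.card_erase_of_mem (Finset.mem_univ i)]; simp
    rw [← hcard]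
    apply Finset.card_le_card_of_injOn (fun m => i :: m)
    · intro m hm
      have hperm : m.Perm ((Finset.univ : Finset (Fin n)).erase i).toList := mem_arr.1 hm
      refine Finset.mem_filter.2 ⟨mem_arr.2 ?_, by simp⟩
      have step : (i :: m).Perm (i :: ((Finset.univ : Finset (Fin n)).erase i).toList) :=
        hperm.cons i
      refine step.trans ?_
      refine List.perm_of_nodup_nodup_toFinset_eq ?_ (Finset.nodup_toList _) ?_
      · refine List.nodup_cons.2 ⟨?_, Finset.nodup_toList _⟩
        rw [Finset.mem_toList]
        simp
      · ext a
        simp [Finset.mem_toList]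
    · intro a ha b hb hab
      simpa using hab
  have hM : (M (n := n) i).card = ((arr (Finset.univ : Finset (Fin n))).filter
      (fun z => ∀ a ∈ z.head?, a ≠ i)).card := by
    congr 1
  omega

theorem main_bound {i : Fin n} (hi : 1 < c i) :
    ∑ S ∈ G c, ((S.card - 1).factorial * (n - S.card).factorial : ℝ)
      ≤ (n.factorial : ℝ) - ((n - 1).factorial : ℝ) := by
  have step1 : ∀ S ∈ G c,
      ((S.card - 1).factorial * (n - S.card).factorial : ℝ) ≤ ((piece c S).card : ℝ) := by
    intro S hS
    obtain ⟨-, hSne, hSsum⟩ := Finset.mem_filter.1 hS |>.imp id id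
    rw [card_piece]
    have h1 : (S.card - 1).factorial ≤ (carr c S).card := card_carr c hSne hSsum
    have h2 : (arr Sᶜ).card = (n - S.card).factorial := by
      rw [card_arr, Finset.card_compl, Fintype.card_fin]
    rw [h2]
    exact_mod_cast Nat.mul_le_mul_right _ h1
  calc ∑ S ∈ G c, ((S.card - 1).factorial * (n - S.card).factorial : ℝ)
      ≤ ∑ S ∈ G c, ((piece c S).card : ℝ) := Finset.sum_le_sum step1
    _ = (((G c).biUnion (piece c)).card : ℝ) := by
        rw [Finset.card_biUnion (piece_disjoint c hi)]
        push_cast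
        rfl
    _ ≤ ((M (n := n) i).card : ℝ) := by
        exact_mod_cast Finset.card_le_card
          (Finset.biUnion_subset.2 (fun S hS => piece_subset c hi hS))
    _ ≤ (n.factorial : ℝ) - ((n - 1).factorial : ℝ) := by
        have := card_M_le (n := n) (i := i)
        have h2 : ((M (n := n) i).card : ℝ) + ((n-1).factorial : ℝ) ≤ (n.factorial : ℝ) := by
          exact_mod_cast this
        linarith

end Main

end CH

open scoped Classical in
/-- The Clifton–Huang weight of the hyperplane `{x : ∑ i, c i * x i = 1}`:
the sum over nonempty subsets `S ⊆ [n]` with `∑_{i ∈ S} c i = 1` of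
`1 / (|S| * binom(n, |S|))`. -/
noncomputable def hyperplaneWeight {n : ℕ} (c : Fin n → ℝ) : ℝ :=
  ∑ S : Finset (Fin n),
    if S.Nonempty ∧ ∑ i ∈ S, c i = 1 then
      1 / (S.card * (n.choose S.card)) else 0

theorem weight_le_of_large_coefficient (n : ℕ) (hn : 1 ≤ n) (c : Fin n → ℝ)
    (h : ∃ i, 1 < c i) :
    hyperplaneWeight c ≤ 1 - 1 / n := by
  classical
  obtain ⟨i, hi⟩ := h
  have hW : hyperplaneWeight c = ∑ S ∈ CH.G c,
      (1 : ℝ) / (S.card * (n.choose S.card)) := by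
    rw [hyperplaneWeight, CH.G, Finset.sum_filter]
  have hterm : ∀ S ∈ CH.G c, (1 : ℝ) / (S.card * (n.choose S.card)) =
      ((S.card - 1).factorial * (n - S.card).factorial : ℝ) / (n.factorial : ℝ) := by
    intro S hS
    have hSne : S.Nonempty := (Finset.mem_filter.1 hS).2.1
    have ht0 : 0 < S.card := Finset.card_pos.2 hSne
    have htn : S.card ≤ n := by
      simpa using Finset.card_le_card (Finset.subset_univ S)
    have hnat : S.card * n.choose S.card * ((S.card - 1).factorial *
        (n - S.card).factorial) = n.factorial := by
      have h1 : S.card * (S.card - 1).factorial = S.card.factorial :=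
        Nat.mul_factorial_pred ht0.ne'
      have h2 := Nat.choose_mul_factorial_mul_factorial htn
      calc S.card * n.choose S.card * ((S.card - 1).factorial * (n - S.card).factorial)
          = n.choose S.card * (S.card * (S.card - 1).factorial) * (n - S.card).factorial := by
            ring
        _ = n.choose S.card * S.card.factorial * (n - S.card).factorial := by rw [h1]
        _ = n.factorial := h2
    have hchoosepos : 0 < n.choose S.card := Nat.choose_pos htn
    have hd : ((S.card : ℝ) * (n.choose S.card : ℝ)) ≠ 0 := by positivity
    have hfpos : (0:ℝ) < (n.factorial : ℝ) := by exact_mod_cast n.factorial_pos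
    rw [div_eq_div_iff hd (ne_of_gt hfpos), one_mul]
    have hcast : ((n.factorial : ℕ) : ℝ) = ((S.card * n.choose S.card *
        ((S.card - 1).factorial * (n - S.card).factorial) : ℕ) : ℝ) := by
      exact_mod_cast hnat.symm
    rw [hcast]
    push_cast
    ring
  rw [hW, Finset.sum_congr rfl hterm]
  have hsumdiv : ∑ S ∈ CH.G c, ((S.card - 1).factorial * (n - S.card).factorial : ℝ)
      / (n.factorial : ℝ) = (∑ S ∈ CH.G c,
      ((S.card - 1).factorial * (n - S.card).factorial : ℝ)) / (n.factorial : ℝ) := by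
    rw [Finset.sum_div]
  rw [hsumdiv]
  have hmain := CH.main_bound c (i := i) hi
  have hfpos : (0:ℝ) < (n.factorial : ℝ) := by exact_mod_cast n.factorial_pos
  have hfin : ((n.factorial : ℝ) - ((n - 1).factorial : ℝ)) / (n.factorial : ℝ)
      = 1 - 1 / n := by
    have hn1 : n * (n-1).factorial = n.factorial := Nat.mul_factorial_pred (by omega)
    have hnR : (n:ℝ) * ((n-1).factorial : ℝ) = (n.factorial : ℝ) := by exact_mod_cast hn1
    have hnpos : (0:ℝ) < (n:ℝ) := by exact_mod_cast hn
    field_simp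
    nlinarith [hnR]
  rw [← hfin]
  gcongr
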